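/- arXiv:2204.07389 — 5 statements merged into one kernel-verified Lean document; each statement's English description precedes it below -/
import Mathlib

section
/- Let 0 < θ < 1 and 0 < ζ < 1. Then there exists r_θ ∈ (0,1), depending only on θ and ζ, such that for all r ∈ (0, r_θ) and all z ≥ 1/(θ r), one has log(r z) ≥ r^ζ · log(z). -/
open Real Filter Set Topology

theorem log_scale_inequality (θ ζ : ℝ) (hθ : 0 < θ) (hθ1 : θ < 1)
    (hζ : 0 < ζ) (hζ1 : ζ < 1) :
    ∃ rθ : ℝ, 0 < rθ ∧ rθ < 1 ∧
      ∀ r : ℝ, 0 < r → r < rθ →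
        ∀ z : ℝ, 1 / (θ * r) ≤ z →
          Real.log (r * z) ≥ r ^ ζ * Real.log z := by
  have hc : 0 < -Real.log θ := by
    have := Real.log_neg hθ hθ1; linarith
  -- tendsto facts
  have h1 : Tendsto (fun r : ℝ => Real.log r * r ^ ζ) (𝓝[>] 0) (𝓝 0) :=
    tendsto_log_mul_rpow_nhdsGT_zero hζ
  have h2 : Tendsto (fun r : ℝ => r ^ ζ) (𝓝[>] 0) (𝓝 0) := by
    have : ContinuousAt (fun r : ℝ => r ^ ζ) 0 :=
      (Real.continuousAt_rpow_const 0 ζ (Or.inr hζ.le))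
    have h := this.continuousWithinAt (s := Set.Ioi (0:ℝ))
    unfold ContinuousWithinAt at h
    simpa [Real.zero_rpow (ne_of_gt hζ)] using h
  have h3 : Tendsto (fun r : ℝ => Real.log r * r ^ ζ + Real.log θ * r ^ ζ)
      (𝓝[>] 0) (𝓝 0) := by
    have := h1.add (h2.const_mul (Real.log θ))
    simpa using this
  have hev : ∀ᶠ r in 𝓝[>] (0:ℝ),
      Real.log r * r ^ ζ + Real.log θ * r ^ ζ > Real.log θ := by
    have := h3.eventually (eventually_gt_nhds (by linarith : Real.log θ < 0))
    exact this
  rw [eventually_nhdsWithin_iff] at hev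
  rcases Metric.eventually_nhds_iff.mp hev with ⟨ε, hε, hball⟩
  refine ⟨min ε (1/2), by positivity, lt_of_le_of_lt (min_le_right _ _) (by norm_num), ?_⟩
  intro r hr hrlt z hz
  have hr1 : r < 1 := lt_of_lt_of_le (lt_of_lt_of_le hrlt (min_le_right _ _)) (by norm_num)
  have hrε : r < ε := lt_of_lt_of_le hrlt (min_le_left _ _)
  have hkey : Real.log r * r ^ ζ + Real.log θ * r ^ ζ > Real.log θ := by
    apply hball (y := r) _ hr
    simp [abs_of_pos hr, hrε, sub_zero]
  have hθr : 0 < θ * r := mul_pos hθ hr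
  have hθr1 : θ * r < 1 := by nlinarith
  have hz1 : 1 < z := lt_of_lt_of_le (by rw [lt_div_iff₀ hθr]; linarith) hz
  have hzpos : 0 < z := by linarith
  have hlogz : Real.log z ≥ -Real.log θ - Real.log r := by
    have h := Real.log_le_log (by positivity) hz
    rw [Real.log_div one_ne_zero (ne_of_gt hθr), Real.log_one, Real.log_mul (ne_of_gt hθ) (ne_of_gt hr)] at h
    linarith
  have hA : 0 < r ^ ζ := Real.rpow_pos_of_pos hr ζ
  have hA1 : r ^ ζ < 1 := Real.rpow_lt_one (le_of_lt hr) hr1 hζ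
  have hlogr : Real.log r < 0 := Real.log_neg hr hr1
  rw [Real.log_mul (ne_of_gt hr) (ne_of_gt hzpos)]
  nlinarith [mul_le_mul_of_nonneg_left hlogz (le_of_lt hA),
    mul_pos hA (sub_pos.mpr hz1)]
end

section
/- Let Ψ : (0,∞) → (0,∞) satisfy the global weak scaling property: there exist 0 < μ₁ ≤ μ₂ < 1 and constants c₁, c₂ > 0 with c₁ λ^{μ₁} Ψ(s) ≤ Ψ(λ s) ≤ c₂ λ^{μ₂} Ψ(s) for all s > 0 and λ ≥ 1. Define k(y) = Ψ(|y|^{−2})/|y|ⁿ for y ∈ ℝⁿ \ {0}. Then there exists C > 0 such that for all r ∈ (0,1] and all y ≠ 0, r^{n+2μ₂} k(ry) ≤ C ( 1_{|y|≤1} Ψ(1) |y|^{−n−2μ₂} + 1_{|y|>1} Ψ(1) |y|^{−n−2μ₁} ). -/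
theorem subordinate_kernel_scaling (n : ℕ) (hn : 1 ≤ n)
    (Ψ : ℝ → ℝ) (μ₁ μ₂ c₁ c₂ : ℝ)
    (hμ₁ : 0 < μ₁) (hμ₁₂ : μ₁ ≤ μ₂) (hμ₂ : μ₂ < 1)
    (hc₁ : 0 < c₁) (hc₂ : 0 < c₂)
    (hΨpos : ∀ s : ℝ, 0 < s → 0 < Ψ s)
    (hscale : ∀ s : ℝ, 0 < s → ∀ lam : ℝ, 1 ≤ lam →
      c₁ * lam ^ μ₁ * Ψ s ≤ Ψ (lam * s) ∧ Ψ (lam * s) ≤ c₂ * lam ^ μ₂ * Ψ s)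
    (k : EuclideanSpace ℝ (Fin n) → ℝ)
    (hk : ∀ y : EuclideanSpace ℝ (Fin n), y ≠ 0 →
      k y = Ψ (‖y‖ ^ (-(2 : ℝ))) / ‖y‖ ^ (n : ℝ)) :
    ∃ C : ℝ, 0 < C ∧
      ∀ r : ℝ, 0 < r → r ≤ 1 → ∀ y : EuclideanSpace ℝ (Fin n), y ≠ 0 →
        r ^ ((n : ℝ) + 2 * μ₂) * k (r • y) ≤
          C * ((if ‖y‖ ≤ 1 then Ψ 1 * ‖y‖ ^ (-((n : ℝ) + 2 * μ₂)) else 0) +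
               (if 1 < ‖y‖ then Ψ 1 * ‖y‖ ^ (-((n : ℝ) + 2 * μ₁)) else 0)) := by
  refine ⟨c₂ + 1 / c₁, by positivity, ?_⟩
  intro r hr hr1 y hy
  set a := ‖y‖ with ha_def
  have ha : 0 < a := norm_pos_iff.mpr hy
  set t := r * a with ht_def
  have ht : 0 < t := mul_pos hr ha
  have hΨ1 : 0 < Ψ 1 := hΨpos 1 one_pos
  have hry : r • y ≠ 0 := smul_ne_zero (ne_of_gt hr) hy
  have hnorm : ‖r • y‖ = t := by
    rw [norm_smul, Real.norm_eq_abs, abs_of_pos hr]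
  have hkval : k (r • y) = Ψ (t ^ (-(2:ℝ))) / t ^ (n:ℝ) := by
    rw [hk _ hry, hnorm]
  have hΨt : 0 < Ψ (t ^ (-(2:ℝ))) := hΨpos _ (Real.rpow_pos_of_pos ht _)
  have hLHS : r ^ ((n:ℝ) + 2*μ₂) * k (r • y)
      = r ^ (2*μ₂) * Ψ (t ^ (-(2:ℝ))) / a ^ (n:ℝ) := by
    rw [hkval, ht_def, Real.rpow_add hr, Real.mul_rpow hr.le ha.le]
    have hrn : (0:ℝ) < r ^ (n:ℝ) := Real.rpow_pos_of_pos hr _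
    field_simp
    rw [Real.mul_rpow hr.le ha.le]; ring
  rw [hLHS]
  -- key inequality depending on case
  have hdiv : ∀ e : ℝ, a ^ (-((n:ℝ) + e)) = a ^ (-e) / a ^ (n:ℝ) := by
    intro e
    rw [Real.rpow_neg ha.le, Real.rpow_add ha, Real.rpow_neg ha.le e]
    field_simp
  have hsmall : t ≤ 1 → Ψ (t ^ (-(2:ℝ))) ≤ c₂ * t ^ (-(2*μ₂)) * Ψ 1 := by
    intro ht1
    have hlam : 1 ≤ t ^ (-(2:ℝ)) :=
      Real.one_le_rpow_of_pos_of_le_one_of_nonpos ht ht1 (by norm_num)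
    have h := (hscale 1 one_pos _ hlam).2
    rw [mul_one] at h
    have : (t ^ (-(2:ℝ))) ^ μ₂ = t ^ (-(2*μ₂)) := by
      rw [← Real.rpow_mul ht.le]
      ring_nf
    rwa [this] at h
  have hbig : 1 < t → Ψ (t ^ (-(2:ℝ))) ≤ (1/c₁) * t ^ (-(2*μ₁)) * Ψ 1 := by
    intro ht1
    have hlam : 1 ≤ t ^ (2:ℝ) := Real.one_le_rpow ht1.le (by norm_num)
    have h := (hscale _ (Real.rpow_pos_of_pos ht (-(2:ℝ))) _ hlam).1
    have hpow2 : t ^ (2:ℝ) * t ^ (-(2:ℝ)) = 1 := by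
      rw [← Real.rpow_add ht]; norm_num
    have h2 : (t ^ (2:ℝ)) ^ μ₁ = t ^ (2*μ₁) := by
      rw [← Real.rpow_mul ht.le]
    rw [hpow2, h2] at h
    have hpow : 0 < t ^ (2*μ₁) := Real.rpow_pos_of_pos ht _
    have hinv : t ^ (-(2*μ₁)) = (t ^ (2*μ₁))⁻¹ := by
      rw [Real.rpow_neg ht.le]
    rw [hinv]
    have hle : Ψ (t ^ (-(2:ℝ))) ≤ Ψ 1 / (c₁ * t ^ (2*μ₁)) := by
      rw [le_div_iff₀ (mul_pos hc₁ hpow), mul_comm]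
      linarith [h]
    calc Ψ (t ^ (-(2:ℝ))) ≤ Ψ 1 / (c₁ * t ^ (2*μ₁)) := hle
      _ = 1 / c₁ * (t ^ (2*μ₁))⁻¹ * Ψ 1 := by
          rw [div_eq_mul_inv, mul_inv]; ring
  by_cases hya : a ≤ 1
  · -- case a ≤ 1
    rw [if_pos hya, if_neg (not_lt.mpr hya), add_zero, hdiv (2*μ₂)]
    have ht1 : t ≤ 1 := by
      calc t = r * a := ht_def
      _ ≤ 1 * 1 := by apply mul_le_mul hr1 hya ha.le; norm_num
      _ = 1 := by norm_num
    have key : r ^ (2*μ₂) * Ψ (t ^ (-(2:ℝ))) ≤ (c₂ + 1/c₁) * (Ψ 1 * a ^ (-(2*μ₂))) := by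
      have h1 := hsmall ht1
      have hrp : 0 < r ^ (2*μ₂) := Real.rpow_pos_of_pos hr _
      have h2 : r ^ (2*μ₂) * Ψ (t ^ (-(2:ℝ))) ≤ r ^ (2*μ₂) * (c₂ * t ^ (-(2*μ₂)) * Ψ 1) := by
        exact mul_le_mul_of_nonneg_left h1 hrp.le
      have h3 : t ^ (-(2*μ₂)) = r ^ (-(2*μ₂)) * a ^ (-(2*μ₂)) := by
        rw [ht_def, Real.mul_rpow hr.le ha.le]
      have h4 : r ^ (2*μ₂) * r ^ (-(2*μ₂)) = 1 := by
        rw [← Real.rpow_add hr]; norm_num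
      calc r ^ (2*μ₂) * Ψ (t ^ (-(2:ℝ))) ≤ r ^ (2*μ₂) * (c₂ * t ^ (-(2*μ₂)) * Ψ 1) := h2
        _ = c₂ * (Ψ 1 * a ^ (-(2*μ₂))) := by
            rw [h3]
            linear_combination (c₂ * a ^ (-(2*μ₂)) * Ψ 1) * h4
        _ ≤ (c₂ + 1/c₁) * (Ψ 1 * a ^ (-(2*μ₂))) := by
            have : 0 < Ψ 1 * a ^ (-(2*μ₂)) := by positivity
            nlinarith [one_div_pos.mpr hc₁]
    have han : (0:ℝ) < a ^ (n:ℝ) := Real.rpow_pos_of_pos ha _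
    have hrw : (c₂ + 1/c₁) * (Ψ 1 * (a ^ (-(2*μ₂)) / a ^ (n:ℝ)))
        = ((c₂ + 1/c₁) * (Ψ 1 * a ^ (-(2*μ₂)))) / a ^ (n:ℝ) := by ring
    rw [hrw]
    apply div_le_div_of_nonneg_right ?_ han.le
    linarith [key]
  · -- case a > 1
    push_neg at hya
    rw [if_neg (not_le.mpr hya), if_pos hya, zero_add, hdiv (2*μ₁)]
    have key : r ^ (2*μ₂) * Ψ (t ^ (-(2:ℝ))) ≤ (c₂ + 1/c₁) * (Ψ 1 * a ^ (-(2*μ₁))) := by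
      by_cases ht1 : t ≤ 1
      · have h1 := hsmall ht1
        have hrp : 0 < r ^ (2*μ₂) := Real.rpow_pos_of_pos hr _
        have h3 : t ^ (-(2*μ₂)) = r ^ (-(2*μ₂)) * a ^ (-(2*μ₂)) := by
          rw [ht_def, Real.mul_rpow hr.le ha.le]
        have h4 : r ^ (2*μ₂) * r ^ (-(2*μ₂)) = 1 := by
          rw [← Real.rpow_add hr]; norm_num
        have h5 : a ^ (-(2*μ₂)) ≤ a ^ (-(2*μ₁)) :=
          Real.rpow_le_rpow_of_exponent_le hya.le (by linarith)
        calc r ^ (2*μ₂) * Ψ (t ^ (-(2:ℝ)))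
            ≤ r ^ (2*μ₂) * (c₂ * t ^ (-(2*μ₂)) * Ψ 1) := mul_le_mul_of_nonneg_left h1 hrp.le
          _ = c₂ * (Ψ 1 * a ^ (-(2*μ₂))) := by
              rw [h3]
              linear_combination (c₂ * a ^ (-(2*μ₂)) * Ψ 1) * h4
          _ ≤ c₂ * (Ψ 1 * a ^ (-(2*μ₁))) := by
              apply mul_le_mul_of_nonneg_left _ hc₂.le
              exact mul_le_mul_of_nonneg_left h5 hΨ1.le
          _ ≤ (c₂ + 1/c₁) * (Ψ 1 * a ^ (-(2*μ₁))) := by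
              have : 0 < Ψ 1 * a ^ (-(2*μ₁)) := by positivity
              nlinarith [one_div_pos.mpr hc₁]
      · push_neg at ht1
        have h1 := hbig ht1
        have hrp : 0 < r ^ (2*μ₂) := Real.rpow_pos_of_pos hr _
        have h3 : t ^ (-(2*μ₁)) = r ^ (-(2*μ₁)) * a ^ (-(2*μ₁)) := by
          rw [ht_def, Real.mul_rpow hr.le ha.le]
        have h4 : r ^ (2*μ₂) * r ^ (-(2*μ₁)) = r ^ (2*μ₂ - 2*μ₁) := by
          rw [← Real.rpow_add hr]; ring_nf
        have h5 : r ^ (2*μ₂ - 2*μ₁) ≤ 1 :=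
          Real.rpow_le_one hr.le hr1 (by linarith)
        have hap : 0 < a ^ (-(2*μ₁)) := Real.rpow_pos_of_pos ha _
        calc r ^ (2*μ₂) * Ψ (t ^ (-(2:ℝ)))
            ≤ r ^ (2*μ₂) * ((1/c₁) * t ^ (-(2*μ₁)) * Ψ 1) := mul_le_mul_of_nonneg_left h1 hrp.le
          _ = r ^ (2*μ₂ - 2*μ₁) * ((1/c₁) * (Ψ 1 * a ^ (-(2*μ₁)))) := by
              rw [h3, ← h4]; ring
          _ ≤ 1 * ((1/c₁) * (Ψ 1 * a ^ (-(2*μ₁)))) := by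
              apply mul_le_mul_of_nonneg_right h5
              positivity
          _ = (1/c₁) * (Ψ 1 * a ^ (-(2*μ₁))) := one_mul _
          _ ≤ (c₂ + 1/c₁) * (Ψ 1 * a ^ (-(2*μ₁))) := by
              have : 0 < Ψ 1 * a ^ (-(2*μ₁)) := by positivity
              nlinarith
    have han : (0:ℝ) < a ^ (n:ℝ) := Real.rpow_pos_of_pos ha _
    have hrw : (c₂ + 1/c₁) * (Ψ 1 * (a ^ (-(2*μ₁)) / a ^ (n:ℝ)))
        = ((c₂ + 1/c₁) * (Ψ 1 * a ^ (-(2*μ₁)))) / a ^ (n:ℝ) := by ring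
    rw [hrw]
    apply div_le_div_of_nonneg_right ?_ han.le
    linarith [key]
end

section
/- Suppose v : Ω → ℝ is bounded by C₀ on a bounded set Ω ⊂ ℝⁿ, and there exist constants C₁, C₂ > 0, τ ∈ (0,1), and p > 2 such that: (i) |v(z₁) − v(z₂)| ≤ C₁(1 + R^{−2})|z₁ − z₂| whenever z₁, z₂ ∈ B_{R/2}(x) with R = dist(x, Ωᶜ); and (ii) for each boundary point x₀ ∈ ∂Ω and each ρ > 0, sup_{B_ρ(x₀) ∩ Ω} v − inf_{B_ρ(x₀) ∩ Ω} v ≤ C₂ ρ^τ. Then v is Hölder continuous on Ω with exponent κ = min{τ/p, 1 − 2/p} and Hölder constant depending only on C₀, C₁, C₂, τ, p, diam(Ω). -/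
set_option maxHeartbeats 1000000 in
theorem interpolation_global_holder (n : ℕ)
    (Ω : Set (EuclideanSpace ℝ (Fin n))) (hΩ : Bornology.IsBounded Ω)
    (v : EuclideanSpace ℝ (Fin n) → ℝ) (C₀ C₁ C₂ τ p : ℝ)
    (hC₀ : 0 < C₀) (hC₁ : 0 < C₁) (hC₂ : 0 < C₂)
    (hτ : 0 < τ) (hτ1 : τ < 1) (hp : 2 < p)
    (hbd : ∀ x ∈ Ω, |v x| ≤ C₀)
    (hint : ∀ x ∈ Ω, ∀ z₁ ∈ Metric.ball x (Metric.infDist x Ωᶜ / 2),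
      ∀ z₂ ∈ Metric.ball x (Metric.infDist x Ωᶜ / 2),
        |v z₁ - v z₂| ≤ C₁ * (1 + 1 / (Metric.infDist x Ωᶜ) ^ 2) * ‖z₁ - z₂‖)
    (hosc : ∀ x₀ ∈ frontier Ω, ∀ ρ : ℝ, 0 < ρ →
      ∀ z₁ ∈ Metric.ball x₀ ρ ∩ Ω, ∀ z₂ ∈ Metric.ball x₀ ρ ∩ Ω,
        v z₁ - v z₂ ≤ C₂ * ρ ^ τ) :
    ∃ C' : ℝ, 0 < C' ∧
      ∀ x ∈ Ω, ∀ y ∈ Ω,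
        |v x - v y| ≤ C' * ‖x - y‖ ^ min (τ / p) (1 - 2 / p) := by
  classical
  have hp0 : (0:ℝ) < p := by linarith
  set κ := min (τ / p) (1 - 2 / p) with hκdef
  have hκpos : 0 < κ := by
    apply lt_min
    · positivity
    · have h2p : 2 / p < 1 := (div_lt_one hp0).2 hp
      linarith
  have hκ1 : κ ≤ 1 - 2 / p := min_le_right _ _
  have hκτ : κ ≤ τ / p := min_le_left _ _
  have h2p0 : (0:ℝ) < 2 / p := by positivity
  have hκlt1 : κ < 1 := lt_of_le_of_lt hκ1 (by linarith)
  have hτp1 : τ / p ≤ 1 := by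
    rw [div_le_one hp0]; linarith
  set D : ℝ := Metric.diam Ω + 2 with hD
  have hdiam0 : 0 ≤ Metric.diam Ω := Metric.diam_nonneg
  have hD2 : (2:ℝ) ≤ D := by simp [hD]; linarith
  have hD1 : (1:ℝ) ≤ D := by linarith
  have hD0 : (0:ℝ) < D := by linarith
  refine ⟨2 * C₁ + 3 * C₂ * D ^ 2, by positivity, ?_⟩
  intro x hx y hy
  rcases eq_or_ne x y with rfl | hxy
  · simp [Real.zero_rpow (ne_of_gt hκpos)]
  set d := ‖x - y‖ with hd
  have hd0 : 0 < d := by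
    rw [hd, norm_pos_iff]
    exact sub_ne_zero.2 hxy
  have hdD : d ≤ D := by
    have h := Metric.dist_le_diam_of_mem hΩ hx hy
    rw [dist_eq_norm] at h
    rw [hd, hD]; linarith
  have hdκ0 : 0 < d ^ κ := Real.rpow_pos_of_pos hd0 _
  -- a point outside Ω at distance diam Ω + 1 from x
  set u : EuclideanSpace ℝ (Fin n) := ‖x - y‖⁻¹ • (x - y) with hu
  have hu1 : ‖u‖ = 1 := by
    rw [hu, norm_smul, norm_inv, norm_norm]
    field_simp
    exact div_self (ne_of_gt hd0)
  set w : EuclideanSpace ℝ (Fin n) := x + (Metric.diam Ω + 1) • u with hw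
  have hwx : dist x w = Metric.diam Ω + 1 := by
    rw [dist_eq_norm]
    have : x - w = -((Metric.diam Ω + 1) • u) := by rw [hw]; abel
    rw [this, norm_neg, norm_smul, hu1, mul_one, Real.norm_eq_abs,
      abs_of_nonneg (by linarith)]
  have hwΩ : w ∈ Ωᶜ := by
    intro hwmem
    have h := Metric.dist_le_diam_of_mem hΩ hx hwmem
    rw [hwx] at h; linarith
  set R := Metric.infDist x Ωᶜ with hR
  have hR0 : 0 ≤ R := Metric.infDist_nonneg
  have hRD : R ≤ D := by
    have h := Metric.infDist_le_dist_of_mem (x := x) hwΩ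
    rw [hwx] at h
    rw [hR, hD]; linarith
  have hball : ∀ z, dist x z < R → z ∈ Ω := by
    intro z hz
    by_contra hzc
    exact absurd (Metric.infDist_le_dist_of_mem (show z ∈ Ωᶜ from hzc)) (not_le.2 hz)
  by_cases hcase : d < (R / D) ^ p
  · -- interior case
    have hRpos : 0 < R := by
      rcases eq_or_lt_of_le hR0 with hReq | hRpos
      · exfalso
        rw [← hReq, zero_div, Real.zero_rpow (ne_of_gt hp0)] at hcase
        linarith
      · exact hRpos
    have hRDpos : 0 < R / D := div_pos hRpos hD0
    have hRD1 : R / D ≤ 1 := (div_le_one hD0).2 hRD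
    have h1 : (R / D) ^ p ≤ R / D := by
      calc (R / D) ^ p ≤ (R / D) ^ (1:ℝ) :=
            Real.rpow_le_rpow_of_exponent_ge hRDpos hRD1 (by linarith)
        _ = R / D := Real.rpow_one _
    have hRD2 : R / D ≤ R / 2 := by
      apply div_le_div_of_nonneg_left hRpos.le (by norm_num) hD2
    have hdR2 : d < R / 2 := lt_of_lt_of_le hcase (h1.trans hRD2)
    have hyball : y ∈ Metric.ball x (R / 2) := by
      rw [Metric.mem_ball, dist_comm, dist_eq_norm]
      exact hdR2
    have hxball : x ∈ Metric.ball x (R / 2) := Metric.mem_ball_self (by linarith)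
    have hest := hint x hx x hxball y hyball
    rw [← hR, ← hd] at hest
    -- d ≤ 1
    have hd1 : d ≤ 1 := le_of_lt (lt_of_lt_of_le hcase
      (Real.rpow_le_one hRDpos.le hRD1 hp0.le))
    -- d = d^κ * d^(1-κ)
    have hsplit : d ^ κ * d ^ (1 - κ) = d := by
      rw [← Real.rpow_add hd0]
      norm_num
    -- d^(1-κ) ≤ 1
    have hA : d ^ (1 - κ) ≤ 1 := Real.rpow_le_one hd0.le hd1 (by linarith)
    -- d^(1-κ) ≤ R^2
    have hB : d ^ (1 - κ) ≤ R ^ 2 := by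
      have e1 : d ^ (1 - κ) ≤ d ^ (2 / p) :=
        Real.rpow_le_rpow_of_exponent_ge hd0 hd1 (by linarith)
      have e2 : d ^ (2 / p) ≤ ((R / D) ^ p) ^ (2 / p) :=
        Real.rpow_le_rpow hd0.le hcase.le h2p0.le
      have e3 : ((R / D) ^ p) ^ (2 / p) = (R / D) ^ (2:ℝ) := by
        rw [← Real.rpow_mul hRDpos.le]
        congr 1
        field_simp
      have e4 : (R / D) ^ (2:ℝ) = (R / D) ^ (2:ℕ) := by
        rw [← Real.rpow_natCast (R / D) 2]
        norm_num
      have e5 : (R / D) ^ (2:ℕ) ≤ R ^ (2:ℕ) := by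
        apply pow_le_pow_left₀ hRDpos.le
        calc R / D ≤ R / 1 := div_le_div_of_nonneg_left hRpos.le one_pos hD1
          _ = R := div_one R
      calc d ^ (1 - κ) ≤ d ^ (2 / p) := e1
        _ ≤ ((R / D) ^ p) ^ (2 / p) := e2
        _ = (R / D) ^ (2:ℝ) := e3
        _ = (R / D) ^ (2:ℕ) := e4
        _ ≤ R ^ (2:ℕ) := e5
    have hR2 : (0:ℝ) < R ^ 2 := by positivity
    -- key bound
    have hkey : C₁ * (1 + 1 / R ^ 2) * d ≤ 2 * C₁ * d ^ κ := by
      have h1R : (1 + 1 / R ^ 2) * d ^ (1 - κ) ≤ 2 := by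
        have : (1 + 1 / R ^ 2) * d ^ (1 - κ)
            = d ^ (1 - κ) + d ^ (1 - κ) / R ^ 2 := by ring
        rw [this]
        have h2' : d ^ (1 - κ) / R ^ 2 ≤ 1 := by
          rw [div_le_one hR2]; exact hB
        linarith
      calc C₁ * (1 + 1 / R ^ 2) * d
          = C₁ * ((1 + 1 / R ^ 2) * d ^ (1 - κ)) * d ^ κ := by
            conv_lhs => rw [← hsplit]
            ring
        _ ≤ C₁ * 2 * d ^ κ := by
            apply mul_le_mul_of_nonneg_right _ hdκ0.le
            exact mul_le_mul_of_nonneg_left h1R hC₁.le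
        _ = 2 * C₁ * d ^ κ := by ring
    calc |v x - v y| ≤ C₁ * (1 + 1 / R ^ 2) * d := hest
      _ ≤ 2 * C₁ * d ^ κ := hkey
      _ ≤ (2 * C₁ + 3 * C₂ * D ^ 2) * d ^ κ := by
          have hpos : 0 ≤ 3 * C₂ * D ^ 2 * d ^ κ := by positivity
          nlinarith
  · -- boundary case
    push_neg at hcase
    have hdp0 : 0 < d ^ (1 / p) := Real.rpow_pos_of_pos hd0 _
    -- R ≤ D * d^(1/p)
    have hRle : R ≤ D * d ^ (1 / p) := by
      have e1 : ((R / D) ^ p) ^ (1 / p) ≤ d ^ (1 / p) :=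
        Real.rpow_le_rpow (Real.rpow_nonneg (by positivity) _) hcase (by positivity)
      have e2 : ((R / D) ^ p) ^ (1 / p) = R / D := by
        rw [← Real.rpow_mul (by positivity)]
        rw [mul_one_div, div_self (ne_of_gt hp0), Real.rpow_one]
      rw [e2] at e1
      calc R = D * (R / D) := by field_simp
        _ ≤ D * d ^ (1 / p) := by
            exact mul_le_mul_of_nonneg_left e1 hD0.le
    -- d ≤ D * d^(1/p)
    have hdle : d ≤ D * d ^ (1 / p) := by
      have e1 : d = d ^ (1 - 1 / p) * d ^ (1 / p) := by
        rw [← Real.rpow_add hd0]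
        norm_num
      have e2 : d ^ (1 - 1 / p) ≤ D := by
        have h1p : 0 ≤ 1 - 1 / p := by
          have : 1 / p ≤ 1 := by rw [div_le_one hp0]; linarith
          linarith
        calc d ^ (1 - 1 / p) ≤ D ^ (1 - 1 / p) :=
              Real.rpow_le_rpow hd0.le hdD h1p
          _ ≤ D ^ (1:ℝ) := Real.rpow_le_rpow_of_exponent_le hD1 (by
              have : 0 < 1 / p := by positivity
              linarith)
          _ = D := Real.rpow_one _
      calc d = d ^ (1 - 1 / p) * d ^ (1 / p) := e1
        _ ≤ D * d ^ (1 / p) := mul_le_mul_of_nonneg_right e2 hdp0.le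
    -- nearest boundary point
    have hΩc_ne : (Ωᶜ : Set (EuclideanSpace ℝ (Fin n))).Nonempty := ⟨w, hwΩ⟩
    obtain ⟨z, hzmem, hzdist⟩ := isClosed_closure.exists_infDist_eq_dist
      (hΩc_ne.closure) x
    rw [Metric.infDist_closure, ← hR] at hzdist
    have hzcl : z ∈ closure Ω := by
      rcases eq_or_lt_of_le hR0 with hReq | hRpos
      · have hxz : dist x z = 0 := by rw [← hzdist, ← hReq]
        rw [dist_eq_zero] at hxz
        rw [← hxz]
        exact subset_closure hx
      · rw [Metric.mem_closure_iff]
        intro ε hε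
        set t : ℝ := max 0 (1 - ε / (2 * R)) with ht
        have ht0 : 0 ≤ t := le_max_left _ _
        have ht1 : t < 1 := by
          apply max_lt one_pos
          have : 0 < ε / (2 * R) := by positivity
          linarith
        have ht2 : 1 - ε / (2 * R) ≤ t := le_max_right _ _
        refine ⟨x + t • (z - x), hball _ ?_, ?_⟩
        · rw [dist_eq_norm]
          have e : x - (x + t • (z - x)) = -(t • (z - x)) := by abel
          rw [e, norm_neg, norm_smul, Real.norm_eq_abs, abs_of_nonneg ht0]
          have hzx : ‖z - x‖ = R := by
            rw [norm_sub_rev, ← dist_eq_norm]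
            exact hzdist.symm
          rw [hzx]
          calc t * R < 1 * R := by
                exact mul_lt_mul_of_pos_right ht1 hRpos
            _ = R := one_mul R
        · rw [dist_eq_norm]
          have e : z - (x + t • (z - x)) = (1 - t) • (z - x) := by
            rw [sub_smul, one_smul]; abel
          rw [e, norm_smul, Real.norm_eq_abs, abs_of_nonneg (by linarith)]
          have hzx : ‖z - x‖ = R := by
            rw [norm_sub_rev, ← dist_eq_norm]
            exact hzdist.symm
          rw [hzx]
          have h1t : 1 - t ≤ ε / (2 * R) := by linarith
          calc (1 - t) * R ≤ ε / (2 * R) * R := by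
                exact mul_le_mul_of_nonneg_right h1t hR0
            _ = ε / 2 := by field_simp
            _ < ε := by linarith
    have hzfr : z ∈ frontier Ω := by
      rw [frontier_eq_closure_inter_closure]
      exact ⟨hzcl, hzmem⟩
    -- radius
    set ρ : ℝ := 3 * D * d ^ (1 / p) with hρ
    have hρ0 : 0 < ρ := by positivity
    have hxz : dist x z = R := hzdist.symm
    have hxball : x ∈ Metric.ball z ρ ∩ Ω := by
      refine ⟨?_, hx⟩
      rw [Metric.mem_ball, hxz]
      calc R ≤ D * d ^ (1 / p) := hRle
        _ < 3 * D * d ^ (1 / p) := by nlinarith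
    have hyball : y ∈ Metric.ball z ρ ∩ Ω := by
      refine ⟨?_, hy⟩
      rw [Metric.mem_ball]
      calc dist y z ≤ dist y x + dist x z := dist_triangle y x z
        _ = d + R := by rw [dist_comm y x, dist_eq_norm, ← hd, hxz]
        _ ≤ D * d ^ (1 / p) + D * d ^ (1 / p) := add_le_add hdle hRle
        _ < 3 * D * d ^ (1 / p) := by nlinarith
    have h1 := hosc z hzfr ρ hρ0 x hxball y hyball
    have h2 := hosc z hzfr ρ hρ0 y hyball x hxball
    have habs : |v x - v y| ≤ C₂ * ρ ^ τ := abs_sub_le_iff.2 ⟨h1, by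
      have : v y - v x = -(v x - v y) := by ring
      linarith⟩
    -- bound C₂ * ρ^τ
    have hρτ : ρ ^ τ ≤ 3 * D * (D * d ^ κ) := by
      have e1 : ρ ^ τ = (3 * D) ^ τ * (d ^ (1 / p)) ^ τ := by
        rw [hρ, Real.mul_rpow (by positivity) hdp0.le]
      have e2 : (3 * D) ^ τ ≤ 3 * D := by
        calc (3 * D) ^ τ ≤ (3 * D) ^ (1:ℝ) :=
              Real.rpow_le_rpow_of_exponent_le (by linarith) hτ1.le
          _ = 3 * D := Real.rpow_one _
      have e3 : (d ^ (1 / p)) ^ τ = d ^ (τ / p) := by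
        rw [← Real.rpow_mul hd0.le]
        congr 1
        field_simp
      have e4 : d ^ (τ / p) ≤ D * d ^ κ := by
        have hsplit : d ^ (τ / p) = d ^ (τ / p - κ) * d ^ κ := by
          rw [← Real.rpow_add hd0]
          congr 1
          ring
        have e5 : d ^ (τ / p - κ) ≤ D := by
          calc d ^ (τ / p - κ) ≤ D ^ (τ / p - κ) :=
                Real.rpow_le_rpow hd0.le hdD (by linarith)
            _ ≤ D ^ (1:ℝ) := Real.rpow_le_rpow_of_exponent_le hD1 (by
                have : 0 ≤ κ := hκpos.le
                linarith)
            _ = D := Real.rpow_one _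
        rw [hsplit]
        exact mul_le_mul_of_nonneg_right e5 hdκ0.le
      calc ρ ^ τ = (3 * D) ^ τ * (d ^ (1 / p)) ^ τ := e1
        _ = (3 * D) ^ τ * d ^ (τ / p) := by rw [e3]
        _ ≤ (3 * D) * (D * d ^ κ) := by
            apply mul_le_mul e2 e4 (by positivity) (by linarith)
    calc |v x - v y| ≤ C₂ * ρ ^ τ := habs
      _ ≤ C₂ * (3 * D * (D * d ^ κ)) := mul_le_mul_of_nonneg_left hρτ hC₂.le
      _ = 3 * C₂ * D ^ 2 * d ^ κ := by ring
      _ ≤ (2 * C₁ + 3 * C₂ * D ^ 2) * d ^ κ := by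
          have hpos : 0 ≤ 2 * C₁ * d ^ κ := by positivity
          nlinarith
end

section
/- Let δ, v : Ω → ℝ with 0 ≤ δ(x) = dist(x, Ωᶜ) on a bounded open Ω ⊂ ℝⁿ, and suppose there exist constants C > 0, κ ∈ (0,1), η ∈ (0, κ) such that |∇v(x)| ≤ C δ(x)^{κ−1} for all x ∈ Ω, and |∇v(x) − ∇v(y)| ≤ C δ(x)^{κ−1−η} |x−y|^η whenever |x − y| ≤ δ(x)/8. Assume also v ∈ C¹(Ω). Then the function ϑ = δ·∇v satisfies |ϑ(x) − ϑ(y)| ≤ C' |x − y|^η for all x, y ∈ Ω, where C' depends only on C, κ, η. -/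
theorem delta_grad_holder (n : ℕ)
    (Ω : Set (EuclideanSpace ℝ (Fin n))) (hΩb : Bornology.IsBounded Ω)
    (hΩo : IsOpen Ω)
    (δ : EuclideanSpace ℝ (Fin n) → ℝ)
    (hδ : ∀ x, δ x = Metric.infDist x Ωᶜ)
    (v : EuclideanSpace ℝ (Fin n) → ℝ)
    (C κ η : ℝ) (hC : 0 < C) (hκ : 0 < κ) (hκ1 : κ < 1)
    (hη : 0 < η) (hηκ : η < κ)
    (hv : ∀ x ∈ Ω, DifferentiableAt ℝ v x)
    (hgrad : ∀ x ∈ Ω, ‖fderiv ℝ v x‖ ≤ C * δ x ^ (κ - 1))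
    (hgradHolder : ∀ x ∈ Ω, ∀ y ∈ Ω, ‖x - y‖ ≤ δ x / 8 →
      ‖fderiv ℝ v x - fderiv ℝ v y‖ ≤ C * δ x ^ (κ - 1 - η) * ‖x - y‖ ^ η)
    (ϑ : EuclideanSpace ℝ (Fin n) → EuclideanSpace ℝ (Fin n) →L[ℝ] ℝ)
    (hϑ : ∀ x, ϑ x = δ x • fderiv ℝ v x) :
    ∃ C' : ℝ, 0 < C' ∧
      ∀ x ∈ Ω, ∀ y ∈ Ω, ‖ϑ x - ϑ y‖ ≤ C' * ‖x - y‖ ^ η := by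
  classical
  have hη1 : η < 1 := hηκ.trans hκ1
  rcases Set.eq_empty_or_nonempty Ωᶜ with hc | hc
  · -- complement empty: δ ≡ 0, ϑ ≡ 0
    refine ⟨1, one_pos, ?_⟩
    intro x hx y hy
    have h0 : ∀ z, δ z = 0 := fun z => by rw [hδ, hc, Metric.infDist_empty]
    have : ϑ x - ϑ y = 0 := by rw [hϑ x, hϑ y, h0 x, h0 y]; simp
    rw [this, norm_zero]
    positivity
  · obtain ⟨z, hz⟩ := hc
    obtain ⟨R, hR⟩ := hΩb.subset_closedBall z
    set D := max R 1 with hD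
    have hD1 : (1:ℝ) ≤ D := le_max_right _ _
    have hD0 : (0:ℝ) < D := lt_of_lt_of_le one_pos hD1
    have hδD : ∀ x ∈ Ω, δ x ≤ D := by
      intro x hx
      rw [hδ]
      calc Metric.infDist x Ωᶜ ≤ dist x z := Metric.infDist_le_dist_of_mem hz
        _ ≤ R := by simpa [Metric.mem_closedBall] using hR hx
        _ ≤ D := le_max_left _ _
    have hδpos : ∀ x ∈ Ω, 0 < δ x := by
      intro x hx
      rw [hδ]
      exact (hΩo.isClosed_compl.notMem_iff_infDist_pos ⟨z, hz⟩).mp (by simpa using hx)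
    have hLip : ∀ x y : EuclideanSpace ℝ (Fin n), |δ x - δ y| ≤ ‖x - y‖ := by
      intro x y
      have h := (Metric.lipschitz_infDist_pt Ωᶜ).dist_le_mul x y
      rw [hδ x, hδ y]
      simpa [Real.dist_eq, dist_eq_norm] using h
    have hDκη : (0:ℝ) < D ^ (κ - η) := Real.rpow_pos_of_pos hD0 _
    refine ⟨32 * C * D ^ (κ - η), by positivity, ?_⟩
    intro x hx y hy
    by_cases hxy : x = y
    · subst hxy
      simp [Real.zero_rpow hη.ne']
    have hr : 0 < ‖x - y‖ := by
      rw [norm_pos_iff]; exact sub_ne_zero_of_ne hxy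
    set r := ‖x - y‖ with hrdef
    have hrη : 0 < r ^ η := Real.rpow_pos_of_pos hr _
    have hδx := hδpos x hx
    have hδy := hδpos y hy
    have hfx := hgrad x hx
    have hfy := hgrad y hy
    -- δ^κ = δ^η * δ^(κ-η), and δ * δ^(κ-1) = δ^κ etc.
    have key : ∀ w ∈ Ω, δ w * (C * δ w ^ (κ - 1)) = C * (δ w ^ η * δ w ^ (κ - η)) := by
      intro w hw
      have h1 : δ w ^ η * δ w ^ (κ - η) = δ w ^ κ := by
        rw [← Real.rpow_add (hδpos w hw)]; congr 1; ring
      have h2 : δ w * δ w ^ (κ - 1) = δ w ^ κ := by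
        nth_rewrite 1 [← Real.rpow_one (δ w)]
        rw [← Real.rpow_add (hδpos w hw)]; congr 1; ring
      rw [h1]; rw [mul_comm (δ w) _, mul_assoc, mul_comm (δ w ^ (κ-1)) _, h2]
    have hϑn : ∀ w, ϑ w = δ w • fderiv ℝ v w := fun w => (hϑ w).trans rfl
    rcases le_or_gt r (δ x / 8) with hcase | hcase
    · -- near case
      have hδyx : δ y ≤ 2 * δ x := by
        have h := hLip y x
        have : |δ y - δ x| ≤ r := by rwa [← norm_neg, neg_sub] at h
        have := abs_le.mp this
        linarith
      have hsplit : ‖ϑ x - ϑ y‖ ≤ |δ x - δ y| * ‖fderiv ℝ v x‖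
          + δ y * ‖fderiv ℝ v x - fderiv ℝ v y‖ := by
        rw [hϑn x, hϑn y]
        have heq : δ x • fderiv ℝ v x - δ y • fderiv ℝ v y
            = (δ x - δ y) • fderiv ℝ v x + δ y • (fderiv ℝ v x - fderiv ℝ v y) := by
          module
        rw [heq]
        calc ‖(δ x - δ y) • fderiv ℝ v x + δ y • (fderiv ℝ v x - fderiv ℝ v y)‖
            ≤ ‖(δ x - δ y) • fderiv ℝ v x‖ + ‖δ y • (fderiv ℝ v x - fderiv ℝ v y)‖ :=
              norm_add_le _ _
          _ = |δ x - δ y| * ‖fderiv ℝ v x‖ + δ y * ‖fderiv ℝ v x - fderiv ℝ v y‖ := by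
              rw [norm_smul, norm_smul, Real.norm_eq_abs, Real.norm_eq_abs,
                abs_of_pos hδy]
      -- first term
      have ht1 : |δ x - δ y| * ‖fderiv ℝ v x‖ ≤ C * D ^ (κ - η) * r ^ η := by
        have h1 : |δ x - δ y| * ‖fderiv ℝ v x‖ ≤ r * (C * δ x ^ (κ - 1)) := by
          apply mul_le_mul (hLip x y) hfx (norm_nonneg _) hr.le
        have h2 : r * (C * δ x ^ (κ - 1)) ≤ (r ^ η * δ x ^ (1 - η)) * (C * δ x ^ (κ - 1)) := by
          apply mul_le_mul_of_nonneg_right _ (by positivity)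
          have hsum : η + (1 - η) = (1:ℝ) := by ring
          calc r = r ^ η * r ^ (1 - η) := by
                rw [← Real.rpow_add hr, hsum, Real.rpow_one]
            _ ≤ r ^ η * δ x ^ (1 - η) := by
                apply mul_le_mul_of_nonneg_left _ (le_of_lt hrη)
                exact Real.rpow_le_rpow hr.le (by linarith) (by linarith)
        have hxx : δ x ^ (1 - η) * δ x ^ (κ - 1) = δ x ^ (κ - η) := by
          rw [← Real.rpow_add hδx]; congr 1; ring
        have h3 : (r ^ η * δ x ^ (1 - η)) * (C * δ x ^ (κ - 1))
            = C * δ x ^ (κ - η) * r ^ η := by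
          rw [← hxx]; ring
        have h4 : C * δ x ^ (κ - η) ≤ C * D ^ (κ - η) := by
          apply mul_le_mul_of_nonneg_left _ hC.le
          exact Real.rpow_le_rpow hδx.le (hδD x hx) (by linarith)
        calc |δ x - δ y| * ‖fderiv ℝ v x‖ ≤ r * (C * δ x ^ (κ - 1)) := h1
          _ ≤ (r ^ η * δ x ^ (1 - η)) * (C * δ x ^ (κ - 1)) := h2
          _ = C * δ x ^ (κ - η) * r ^ η := h3
          _ ≤ C * D ^ (κ - η) * r ^ η := by
              apply mul_le_mul_of_nonneg_right h4 hrη.le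
      -- second term
      have ht2 : δ y * ‖fderiv ℝ v x - fderiv ℝ v y‖ ≤ 2 * (C * D ^ (κ - η) * r ^ η) := by
        have hH := hgradHolder x hx y hy hcase
        calc δ y * ‖fderiv ℝ v x - fderiv ℝ v y‖
            ≤ (2 * δ x) * (C * δ x ^ (κ - 1 - η) * r ^ η) := by
              apply mul_le_mul hδyx hH (norm_nonneg _) (by positivity)
          _ = 2 * (C * (δ x * δ x ^ (κ - 1 - η)) * r ^ η) := by ring
          _ = 2 * (C * δ x ^ (κ - η) * r ^ η) := by
              have hxx2 : δ x * δ x ^ (κ - 1 - η) = δ x ^ (κ - η) := by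
                nth_rewrite 1 [← Real.rpow_one (δ x)]
                rw [← Real.rpow_add hδx]; congr 1; ring
              rw [hxx2]
          _ ≤ 2 * (C * D ^ (κ - η) * r ^ η) := by
              have : C * δ x ^ (κ - η) ≤ C * D ^ (κ - η) := by
                apply mul_le_mul_of_nonneg_left _ hC.le
                exact Real.rpow_le_rpow hδx.le (hδD x hx) (by linarith)
              nlinarith
      have : ‖ϑ x - ϑ y‖ ≤ 3 * (C * D ^ (κ - η) * r ^ η) := by
        calc ‖ϑ x - ϑ y‖ ≤ |δ x - δ y| * ‖fderiv ℝ v x‖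
            + δ y * ‖fderiv ℝ v x - fderiv ℝ v y‖ := hsplit
          _ ≤ C * D ^ (κ - η) * r ^ η + 2 * (C * D ^ (κ - η) * r ^ η) := add_le_add ht1 ht2
          _ = 3 * (C * D ^ (κ - η) * r ^ η) := by ring
      have hT : 0 < C * D ^ (κ - η) * r ^ η := by positivity
      calc ‖ϑ x - ϑ y‖ ≤ 3 * (C * D ^ (κ - η) * r ^ η) := this
        _ ≤ 32 * C * D ^ (κ - η) * r ^ η := by nlinarith [hT]
    · -- far case: δ x ≤ 8 r, δ y ≤ 9 r
      have hδxr : δ x ≤ 8 * r := by linarith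
      have hδyr : δ y ≤ 9 * r := by
        have h := hLip y x
        have : |δ y - δ x| ≤ r := by rwa [← norm_neg, neg_sub] at h
        have := abs_le.mp this
        linarith
      have hbound : ∀ w ∈ Ω, ∀ a : ℝ, 1 ≤ a → δ w ≤ a * r →
          δ w * ‖fderiv ℝ v w‖ ≤ a * (C * D ^ (κ - η) * r ^ η) := by
        intro w hw a ha hwa
        have hδw := hδpos w hw
        have ha0 : (0:ℝ) < a := lt_of_lt_of_le one_pos ha
        have h1 : δ w * ‖fderiv ℝ v w‖ ≤ δ w * (C * δ w ^ (κ - 1)) :=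
          mul_le_mul_of_nonneg_left (hgrad w hw) hδw.le
        rw [key w hw] at h1
        have h2 : δ w ^ η ≤ a * r ^ η := by
          calc δ w ^ η ≤ (a * r) ^ η :=
                Real.rpow_le_rpow hδw.le hwa hη.le
            _ = a ^ η * r ^ η := Real.mul_rpow ha0.le hr.le
            _ ≤ a * r ^ η := by
                apply mul_le_mul_of_nonneg_right _ hrη.le
                calc a ^ η ≤ a ^ (1:ℝ) :=
                      Real.rpow_le_rpow_of_exponent_le ha hη1.le
                  _ = a := Real.rpow_one a
        have h3 : δ w ^ (κ - η) ≤ D ^ (κ - η) :=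
          Real.rpow_le_rpow hδw.le (hδD w hw) (by linarith)
        have h4 : δ w ^ η * δ w ^ (κ - η) ≤ (a * r ^ η) * D ^ (κ - η) := by
          apply mul_le_mul h2 h3 (by positivity) (by positivity)
        calc δ w * ‖fderiv ℝ v w‖ ≤ C * (δ w ^ η * δ w ^ (κ - η)) := h1
          _ ≤ C * ((a * r ^ η) * D ^ (κ - η)) :=
              mul_le_mul_of_nonneg_left h4 hC.le
          _ = a * (C * D ^ (κ - η) * r ^ η) := by ring
      have hnx : ‖ϑ x‖ = δ x * ‖fderiv ℝ v x‖ := by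
        rw [hϑn x]
        exact norm_smul (δ x) (fderiv ℝ v x) ▸ (by rw [Real.norm_eq_abs, abs_of_pos hδx])
      have hny : ‖ϑ y‖ = δ y * ‖fderiv ℝ v y‖ := by
        rw [hϑn y]
        exact norm_smul (δ y) (fderiv ℝ v y) ▸ (by rw [Real.norm_eq_abs, abs_of_pos hδy])
      calc ‖ϑ x - ϑ y‖ ≤ ‖ϑ x‖ + ‖ϑ y‖ := norm_sub_le _ _
        _ = δ x * ‖fderiv ℝ v x‖ + δ y * ‖fderiv ℝ v y‖ := by rw [hnx, hny]
        _ ≤ 8 * (C * D ^ (κ - η) * r ^ η) + 9 * (C * D ^ (κ - η) * r ^ η) :=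
            add_le_add (hbound x hx 8 (by norm_num) hδxr)
              (hbound y hy 9 (by norm_num) hδyr)
        _ = 17 * (C * D ^ (κ - η) * r ^ η) := by ring
        _ ≤ 32 * C * D ^ (κ - η) * r ^ η := by
            have hT : 0 < C * D ^ (κ - η) * r ^ η := by positivity
            nlinarith [hT]
end

section
/- Let u : ℝⁿ → ℝ be anti-symmetric with respect to reflection R across the hyperplane {x·e = λ}, i.e., u(R(x)) = −u(x) for all x, and let k : (0,∞) → (0,∞) be strictly decreasing. Let H = {x : x·e > λ} and suppose x ∈ H with u(x) = 0 and u ≥ 0 on H. Then ∫_{ℝⁿ} (u(y) − u(x)) k(|y − x|) dy = ∫_{H} u(y) ( k(|y − x|) − k(|R(y) − x|) ) dy ≥ 0, and it equals 0 only if u ≡ 0 on H. -/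
open MeasureTheory
open scoped RealInnerProductSpace

theorem antisymmetric_kernel_symmetrization (n : ℕ) (hn : 1 ≤ n)
    (e : EuclideanSpace ℝ (Fin n)) (he : ‖e‖ = 1) (lam : ℝ)
    (R : EuclideanSpace ℝ (Fin n) → EuclideanSpace ℝ (Fin n))
    (hR : ∀ y, R y = y - (2 * ⟪y, e⟫ - 2 * lam) • e)
    (H : Set (EuclideanSpace ℝ (Fin n))) (hH : H = {y | lam < ⟪y, e⟫})
    (u : EuclideanSpace ℝ (Fin n) → ℝ)
    (hu_cont : Continuous u) (hu_supp : HasCompactSupport u)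
    (hanti : ∀ y, u (R y) = -u y)
    (k : ℝ → ℝ) (hkpos : ∀ t : ℝ, 0 < t → 0 < k t)
    (hkanti : StrictAntiOn k (Set.Ioi 0))
    (x : EuclideanSpace ℝ (Fin n)) (hx : x ∈ H)
    (hux : u x = 0) (hunn : ∀ y ∈ H, 0 ≤ u y)
    (hint1 : Integrable (fun y => (u y - u x) * k ‖y - x‖))
    (hint2 : IntegrableOn (fun y => u y * (k ‖y - x‖ - k ‖R y - x‖)) H) :
    (∫ y, (u y - u x) * k ‖y - x‖)
        = (∫ y in H, u y * (k ‖y - x‖ - k ‖R y - x‖)) ∧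
      0 ≤ ∫ y, (u y - u x) * k ‖y - x‖ ∧
      ((∫ y, (u y - u x) * k ‖y - x‖) = 0 → ∀ y ∈ H, u y = 0) := by
  classical
  have he2 : ⟪e, e⟫ = (1 : ℝ) := by
    have h := real_inner_self_eq_norm_sq e
    rw [he] at h; simpa using h
  have hinner : Continuous fun y : EuclideanSpace ℝ (Fin n) => ⟪y, e⟫ :=
    continuous_id.inner continuous_const
  have hRe : ∀ y, ⟪R y, e⟫ = 2 * lam - ⟪y, e⟫ := by
    intro y
    rw [hR, inner_sub_left, real_inner_smul_left, he2]
    ring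
  have hRR : ∀ y, R (R y) = y := by
    intro y
    rw [hR (R y), hRe, hR y]
    module
  have contR : Continuous R := by
    have hfe : R = fun y => y - (2 * ⟪y, e⟫ - 2 * lam) • e := funext hR
    rw [hfe]
    fun_prop
  let Rh : Homeomorph (EuclideanSpace ℝ (Fin n)) (EuclideanSpace ℝ (Fin n)) :=
    { toFun := R, invFun := R, left_inv := hRR, right_inv := hRR,
      continuous_toFun := contR, continuous_invFun := contR }
  have hemb : MeasurableEmbedding R := Rh.measurableEmbedding
  have hSform : ∀ y : EuclideanSpace ℝ (Fin n),
      (Submodule.reflection (ℝ ∙ e)ᗮ) y = y - (2 * ⟪y, e⟫) • e := by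
    intro y
    rw [Submodule.reflection_orthogonal_apply, Submodule.reflection_singleton_apply, he, real_inner_comm]
    push_cast
    match_scalars <;> ring
  have hmp : MeasurePreserving R volume volume := by
    have hcomp : R = (fun z => z + (2 * lam) • e) ∘ (Submodule.reflection (ℝ ∙ e)ᗮ) := by
      funext y
      simp only [Function.comp_apply, hSform, hR]
      module
    rw [hcomp]
    exact (measurePreserving_add_right volume ((2 * lam) • e)).comp
      (Submodule.reflection (ℝ ∙ e)ᗮ).measurePreserving
  -- the hyperplane has measure zero
  have hplaneGen : ∀ c : ℝ, volume {y : EuclideanSpace ℝ (Fin n) | ⟪y, e⟫ = c} = 0 := by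
    intro c
    have hset : {y : EuclideanSpace ℝ (Fin n) | ⟪y, e⟫ = c}
        = (AffineSubspace.mk' (c • e) (ℝ ∙ e)ᗮ : Set (EuclideanSpace ℝ (Fin n))) := by
      ext y
      simp only [Set.mem_setOf_eq, SetLike.mem_coe, AffineSubspace.mem_mk',
        Submodule.mem_orthogonal_singleton_iff_inner_right, vsub_eq_sub, inner_sub_right,
        real_inner_smul_right, he2, real_inner_comm e y]
      constructor <;> intro h <;> linarith
    have hne : (AffineSubspace.mk' (c • e) (ℝ ∙ e)ᗮ
        : AffineSubspace ℝ (EuclideanSpace ℝ (Fin n))) ≠ ⊤ := by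
      intro h
      have hmem : ((1 + c) • e) ∈ AffineSubspace.mk' (c • e) (ℝ ∙ e)ᗮ := by
        rw [h]; exact AffineSubspace.mem_top _ _ _
      rw [AffineSubspace.mem_mk'] at hmem
      have h1 : ((1 + c) • e : EuclideanSpace ℝ (Fin n)) -ᵥ c • e = e := by
        rw [vsub_eq_sub]; module
      rw [h1, Submodule.mem_orthogonal_singleton_iff_inner_right, he2] at hmem
      norm_num at hmem
    rw [hset]
    exact Measure.addHaar_affineSubspace volume _ hne
  have hplane : volume {y : EuclideanSpace ℝ (Fin n) | ⟪y, e⟫ = lam} = 0 := hplaneGen lam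
  have hplanex : volume {y : EuclideanSpace ℝ (Fin n) | ⟪y, e⟫ = ⟪x, e⟫} = 0 := hplaneGen _
  have hHopen : IsOpen H := by
    rw [hH]; exact isOpen_lt continuous_const hinner
  have hHmeas : MeasurableSet H := hHopen.measurableSet
  have hxl : lam < ⟪x, e⟫ := by rw [hH] at hx; exact hx
  -- norm comparison
  have hnormlt : ∀ y, lam < ⟪y, e⟫ → ‖y - x‖ < ‖R y - x‖ := by
    intro y hy
    have key : ‖y - x‖ ^ 2 < ‖R y - x‖ ^ 2 := by
      have h3 : R y - x = (y - x) - (2 * ⟪y, e⟫ - 2 * lam) • e := by rw [hR]; abel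
      have h4 := norm_sub_sq_real (y - x) ((2 * ⟪y, e⟫ - 2 * lam) • e)
      rw [real_inner_smul_right, inner_sub_left, norm_smul, Real.norm_eq_abs, he, mul_one,
        sq_abs] at h4
      rw [h3, h4]
      nlinarith [mul_pos (sub_pos.2 hy) (sub_pos.2 hxl)]
    exact lt_of_pow_lt_pow_left₀ 2 (norm_nonneg _) key
  have hfac : ∀ y ∈ H, y ≠ x → 0 < k ‖y - x‖ - k ‖R y - x‖ := by
    intro y hy hyx
    have hy' : lam < ⟪y, e⟫ := by rw [hH] at hy; exact hy
    have h0 : (0 : ℝ) < ‖y - x‖ := by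
      rw [norm_pos_iff]; exact sub_ne_zero.2 hyx
    have hlt := hnormlt y hy'
    have := hkanti (Set.mem_Ioi.2 h0) (Set.mem_Ioi.2 (h0.trans hlt)) hlt
    linarith
  have hptnn : ∀ y ∈ H, 0 ≤ u y * (k ‖y - x‖ - k ‖R y - x‖) := by
    intro y hy
    by_cases hyx : y = x
    · simp [hyx, hux]
    · exact mul_nonneg (hunn y hy) (hfac y hy hyx).le
  have hux0 : (fun y => (u y - u x) * k ‖y - x‖)
      = fun y => u y * k ‖y - x‖ := by
    funext y; rw [hux, sub_zero]
  have hint1' : Integrable (fun y => u y * k ‖y - x‖) := hux0 ▸ hint1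
  have hA : IntegrableOn (fun y => u y * k ‖y - x‖) H := hint1'.integrableOn
  have hB : IntegrableOn (fun z => u z * k ‖R z - x‖) H :=
    IntegrableOn.congr_fun (hA.sub hint2)
      (fun y _ => by simp only [Pi.sub_apply]; ring) hHmeas
  -- complement is a.e. the reflected half space
  have hsub1 : Hᶜ \ {y | ⟪y, e⟫ < lam} ⊆ {y : EuclideanSpace ℝ (Fin n) | ⟪y, e⟫ = lam} := by
    intro y hy
    rcases hy with ⟨hy1, hy2⟩
    rw [Set.mem_compl_iff, hH, Set.mem_setOf_eq, not_lt] at hy1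
    rw [Set.mem_setOf_eq, not_lt] at hy2
    exact le_antisymm hy1 hy2
  have hsub2 : {y : EuclideanSpace ℝ (Fin n) | ⟪y, e⟫ < lam} ⊆ Hᶜ := by
    intro y hy
    rw [Set.mem_compl_iff, hH, Set.mem_setOf_eq, not_lt]
    exact le_of_lt hy
  have hae : (Hᶜ : Set (EuclideanSpace ℝ (Fin n)))
      =ᵐ[volume] {y | ⟪y, e⟫ < lam} := by
    rw [MeasureTheory.ae_eq_set]
    refine ⟨measure_mono_null hsub1 hplane, ?_⟩
    rw [Set.diff_eq_empty.2 hsub2]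
    simp
  have hpre : R ⁻¹' {y : EuclideanSpace ℝ (Fin n) | ⟪y, e⟫ < lam} = H := by
    ext y
    simp only [Set.mem_preimage, Set.mem_setOf_eq, hRe, hH]
    constructor <;> intro h <;> linarith
  have hcv : (∫ y in {y : EuclideanSpace ℝ (Fin n) | ⟪y, e⟫ < lam}, u y * k ‖y - x‖)
      = ∫ z in H, u (R z) * k ‖R z - x‖ := by
    rw [← hmp.setIntegral_preimage_emb hemb (fun y => u y * k ‖y - x‖), hpre]
  have hcv2 : (∫ z in H, u (R z) * k ‖R z - x‖)
      = - ∫ z in H, u z * k ‖R z - x‖ := by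
    simp_rw [hanti, neg_mul, integral_neg]
  have hdiff : (∫ y in H, u y * (k ‖y - x‖ - k ‖R y - x‖))
      = (∫ y in H, u y * k ‖y - x‖) - ∫ y in H, u y * k ‖R y - x‖ := by
    simp_rw [mul_sub]
    exact integral_sub hA hB
  have hkey : (∫ y, (u y - u x) * k ‖y - x‖)
      = ∫ y in H, u y * (k ‖y - x‖ - k ‖R y - x‖) := by
    rw [hux0, ← integral_add_compl hHmeas hint1', setIntegral_congr_set hae, hcv, hcv2,
      hdiff]
    ring
  refine ⟨hkey, ?_, ?_⟩
  · rw [hkey]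
    exact setIntegral_nonneg hHmeas hptnn
  · intro h0 y hy
    rw [hkey] at h0
    have hnn_ae : 0 ≤ᵐ[volume.restrict H]
        fun y => u y * (k ‖y - x‖ - k ‖R y - x‖) :=
      (ae_restrict_iff' hHmeas).2 (Filter.Eventually.of_forall hptnn)
    have hzero := (integral_eq_zero_iff_of_nonneg_ae hnn_ae hint2).1 h0
    have hx0 : volume ({x} : Set (EuclideanSpace ℝ (Fin n))) = 0 := by
      refine measure_mono_null ?_ hplanex
      intro z hz
      rw [Set.mem_singleton_iff] at hz
      subst hz
      exact rfl
    have hxnull : (volume.restrict H) {x} = 0 :=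
      le_antisymm ((Measure.restrict_apply_le _ _).trans hx0.le) zero_le
    have hu_ae : ∀ᵐ z ∂(volume.restrict H), u z = 0 := by
      have hmem := ae_restrict_mem (μ := (volume : Measure (EuclideanSpace ℝ (Fin n)))) hHmeas
      have hnex : ∀ᵐ z ∂(volume.restrict H), z ≠ x := by
        rw [ae_iff]
        convert hxnull using 2
        ext z
        simp
      filter_upwards [hzero, hmem, hnex] with z hz hzH hzx
      have hpos := hfac z hzH hzx
      rcases mul_eq_zero.1 hz with h | h
      · exact h
      · exact absurd h (ne_of_gt hpos)
    have hopen2 : IsOpen {a : EuclideanSpace ℝ (Fin n) | ¬ u a = 0} :=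
      isOpen_ne.preimage hu_cont
    have hopen : IsOpen ({a : EuclideanSpace ℝ (Fin n) | ¬ u a = 0} ∩ H) :=
      hopen2.inter hHopen
    have hset0 : volume ({a : EuclideanSpace ℝ (Fin n) | ¬ u a = 0} ∩ H) = 0 := by
      have h1 := ae_iff.1 hu_ae
      rwa [Measure.restrict_apply hopen2.measurableSet] at h1
    have hempty := hopen.eq_empty_of_measure_zero hset0
    by_contra hne
    have hmem2 : y ∈ ({a : EuclideanSpace ℝ (Fin n) | ¬ u a = 0} ∩ H) := ⟨hne, hy⟩
    rw [hempty] at hmem2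
    exact hmem2
end
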